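/- Let R be a ℤ₊-ring, Q a Serre semiprime ideal (an intersection of Serre prime ideals), and I a left Serre ideal such that Iⁿ ⊆ Q for some n ≥ 1. Then I ⊆ Q. -/

import Mathlib

variable {Γ R : Type*}

/-- The positive cone `R₊` of a `ℤ₊`-ring with basis `b`. -/
def ZPos [NonUnitalRing R] (b : Module.Basis Γ ℤ R) : Set R :=
  {r | ∀ γ : Γ, 0 ≤ b.repr r γ}

/-- The structure constants of the multiplication with respect to `b` are nonnegative,
i.e. `(R, b)` is a `ℤ₊`-ring. -/
def PosBasis [NonUnitalRing R] (b : Module.Basis Γ ℤ R) : Prop :=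
  ∀ α β γ : Γ, 0 ≤ b.repr (b α * b β) γ

/-- A Serre ideal: a two-sided ideal of the form `⨁_{γ ∈ Γ'} ℤ b_γ`. -/
def IsSerreIdeal [NonUnitalRing R] (b : Module.Basis Γ ℤ R) (I : Set R) : Prop :=
  (∃ Γ' : Set Γ, I = ↑(Submodule.span ℤ (⇑b '' Γ'))) ∧
  (∀ r ∈ I, ∀ s : R, s * r ∈ I) ∧
  (∀ r ∈ I, ∀ s : R, r * s ∈ I)

/-- A Serre prime ideal: a proper Serre ideal `P` such that for all Serre ideals
`I, J`, `IJ ⊆ P` implies `I ⊆ P` or `J ⊆ P`. -/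
def IsSerrePrime [NonUnitalRing R] (b : Module.Basis Γ ℤ R) (P : Set R) : Prop :=
  IsSerreIdeal b P ∧ P ≠ Set.univ ∧
    ∀ I J : Set R, IsSerreIdeal b I → IsSerreIdeal b J →
      (∀ x ∈ I, ∀ y ∈ J, x * y ∈ P) → I ⊆ P ∨ J ⊆ P

/-- The product `f 0 * f 1 * ⋯ * f m` of a nonempty tuple of ring elements. -/
def finProd [NonUnitalRing R] : ∀ {m : ℕ}, (Fin (m + 1) → R) → R
  | 0, f => f 0
  | _ + 1, f => f 0 * finProd fun i => f i.succ




namespace SerreAux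

variable [NonUnitalRing R]

open Submodule

def PosBasis' (b : Module.Basis Γ ℤ R) : Prop := ∀ α β γ : Γ, 0 ≤ b.repr (b α * b β) γ

def Pos (b : Module.Basis Γ ℤ R) (x : R) : Prop := ∀ γ, 0 ≤ b.repr x γ

def Dom (b : Module.Basis Γ ℤ R) (x y : R) : Prop := ∀ γ, b.repr x γ ≤ b.repr y γ

variable (b : Module.Basis Γ ℤ R)

theorem mem_span_iff {A : Set Γ} {x : R} :
    x ∈ span ℤ (⇑b '' A) ↔ ∀ γ, b.repr x γ ≠ 0 → γ ∈ A := by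
  rw [Module.Basis.mem_span_image]
  constructor
  · intro h γ hγ; exact h (Finsupp.mem_support_iff.2 hγ)
  · intro h γ hγ; exact h γ (Finsupp.mem_support_iff.1 hγ)

theorem mul_expand_left (x y : R) :
    x * y = (b.repr x).sum fun α c => c • (b α * y) := by
  conv_lhs => rw [← b.linearCombination_repr x]
  rw [Finsupp.linearCombination_apply, Finsupp.sum_mul]
  simp [smul_mul_assoc]

theorem mul_expand_right (x y : R) :
    x * y = (b.repr y).sum fun β c => c • (x * b β) := by
  conv_lhs => rw [← b.linearCombination_repr y]
  rw [Finsupp.linearCombination_apply, Finsupp.mul_sum]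
  simp [mul_smul_comm]

theorem repr_mul_left (x y : R) (γ : Γ) :
    b.repr (x * y) γ = (b.repr x).sum fun α c => c * b.repr (b α * y) γ := by
  rw [mul_expand_left b x y, map_finsuppSum, Finsupp.sum_apply]
  simp only [map_smul, Finsupp.smul_apply, smul_eq_mul]

theorem repr_mul_right (x y : R) (γ : Γ) :
    b.repr (x * y) γ = (b.repr y).sum fun β c => c * b.repr (x * b β) γ := by
  rw [mul_expand_right b x y, map_finsuppSum, Finsupp.sum_apply]
  simp only [map_smul, Finsupp.smul_apply, smul_eq_mul]

theorem pos_mul (hb : PosBasis' b) {x y : R} (hx : Pos b x) (hy : Pos b y) : Pos b (x * y) := by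
  intro γ
  rw [repr_mul_left, Finsupp.sum]
  apply Finset.sum_nonneg
  intro α _
  apply mul_nonneg (hx α)
  rw [repr_mul_right, Finsupp.sum]
  apply Finset.sum_nonneg
  intro β _
  exact mul_nonneg (hy β) (hb α β γ)

theorem exists_left {x y : R} {γ : Γ} (h : b.repr (x * y) γ ≠ 0) :
    ∃ α, b.repr x α ≠ 0 ∧ b.repr (b α * y) γ ≠ 0 := by
  by_contra hc
  push_neg at hc
  apply h
  rw [repr_mul_left, Finsupp.sum]
  apply Finset.sum_eq_zero
  intro α hα
  rw [hc α (Finsupp.mem_support_iff.1 hα), mul_zero]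

theorem exists_right {x y : R} {γ : Γ} (h : b.repr (x * y) γ ≠ 0) :
    ∃ β, b.repr y β ≠ 0 ∧ b.repr (x * b β) γ ≠ 0 := by
  by_contra hc
  push_neg at hc
  apply h
  rw [repr_mul_right, Finsupp.sum]
  apply Finset.sum_eq_zero
  intro β hβ
  rw [hc β (Finsupp.mem_support_iff.1 hβ), mul_zero]

theorem pos_of_dom {x y : R} (hx : Pos b x) (h : Dom b x y) : Pos b y :=
  fun γ => le_trans (hx γ) (h γ)

theorem pos_sub {x y : R} (h : Dom b x y) : Pos b (y - x) := by
  intro γ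
  rw [map_sub, Finsupp.sub_apply, sub_nonneg]
  exact h γ

theorem dom_refl (x : R) : Dom b x x := fun _ => le_rfl

theorem dom_ne {x y : R} (hx : Pos b x) (h : Dom b x y) {γ : Γ}
    (hne : b.repr x γ ≠ 0) : b.repr y γ ≠ 0 := by
  have h1 := hx γ
  have h2 := h γ
  omega

theorem mul_dom (hb : PosBasis' b) {x y x' y' : R} (hx : Pos b x) (hy : Pos b y)
    (h1 : Dom b x x') (h2 : Dom b y y') : Dom b (x * y) (x' * y') := by
  have p1 : Pos b ((x' - x) * y') := pos_mul b hb (pos_sub b h1) (pos_of_dom b hy h2)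
  have p2 : Pos b (x * (y' - y)) := pos_mul b hb hx (pos_sub b h2)
  intro γ
  have e0 : x' * y' - x * y = (x' - x) * y' + x * (y' - y) := by
    rw [sub_mul, mul_sub]; abel
  have e1 := congrArg (fun z => b.repr z γ) e0
  simp only [map_sub, map_add, Finsupp.sub_apply, Finsupp.add_apply] at e1
  have := p1 γ
  have := p2 γ
  omega

theorem basis_pos (γ : Γ) : Pos b (b γ) := by
  intro γ'
  rw [b.repr_self]
  rcases eq_or_ne γ γ' with rfl | h
  · rw [Finsupp.single_eq_same]; norm_num
  · rw [Finsupp.single_eq_of_ne h.symm]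

theorem basis_dom {z : R} (hz : Pos b z) {γ : Γ} (h : b.repr z γ ≠ 0) :
    Dom b (b γ) z := by
  intro γ'
  rcases eq_or_ne γ γ' with rfl | hne
  · rw [b.repr_self, Finsupp.single_eq_same]
    have := hz γ; omega
  · rw [b.repr_self, Finsupp.single_eq_of_ne hne.symm]
    exact hz γ'

theorem finProd_pos (hb : PosBasis' b) : ∀ {m : ℕ} (f : Fin (m + 1) → R), (∀ i, Pos b (f i)) →
    Pos b (finProd f)
  | 0, f, h => h 0
  | m + 1, f, h => pos_mul b hb (h 0) (finProd_pos hb _ fun i => h i.succ)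

theorem finProd_dom (hb : PosBasis' b) : ∀ {m : ℕ} (f g : Fin (m + 1) → R), (∀ i, Pos b (f i)) →
    (∀ i, Dom b (f i) (g i)) → Dom b (finProd f) (finProd g)
  | 0, f, g, _, hd => hd 0
  | m + 1, f, g, hp, hd =>
    mul_dom b hb (hp 0) (finProd_pos b hb _ fun i => hp i.succ) (hd 0)
      (finProd_dom hb _ _ (fun i => hp i.succ) (fun i => hd i.succ))

theorem finProd_cons {m : ℕ} (x : R) (f : Fin (m + 1) → R) :
    finProd (Fin.cons x f) = x * finProd f := by
  simp [finProd, Fin.cons_succ]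

theorem mul_finProd_head {m : ℕ} (r : R) (g : Fin (m + 1) → R) :
    r * finProd g = finProd (Fin.cons (r * g 0) fun i => g i.succ) := by
  cases m with
  | zero => simp [finProd]
  | succ m => simp [finProd, Fin.cons_succ, mul_assoc]

theorem mul_mem_span {A B C : Set Γ}
    (h : ∀ γ ∈ A, ∀ δ ∈ B, b γ * b δ ∈ span ℤ (⇑b '' C)) :
    ∀ x ∈ span ℤ (⇑b '' A), ∀ y ∈ span ℤ (⇑b '' B), x * y ∈ span ℤ (⇑b '' C) := by
  intro x hx
  induction hx using Submodule.span_induction with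
  | mem x hxm =>
    obtain ⟨γ, hγ, rfl⟩ := hxm
    intro y hy
    induction hy using Submodule.span_induction with
    | mem y hym =>
      obtain ⟨δ, hδ, rfl⟩ := hym
      exact h γ hγ δ hδ
    | zero => rw [mul_zero]; exact zero_mem _
    | add y z _ _ hy hz => rw [mul_add]; exact add_mem hy hz
    | smul c y _ hy => rw [mul_smul_comm]; exact smul_mem _ c hy
  | zero => intro y hy; rw [zero_mul]; exact zero_mem _
  | add x z _ _ hx hz => intro y hy; rw [add_mul]; exact add_mem (hx y hy) (hz y hy)
  | smul c x _ hx => intro y hy; rw [smul_mul_assoc]; exact smul_mem _ c (hx y hy)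

theorem mem_top_span (x : R) : x ∈ span ℤ (⇑b '' (Set.univ : Set Γ)) := by
  rw [Set.image_univ, b.span_eq]; trivial

end SerreAux


/-- if `Q` is a Serre semiprime ideal (an intersection of Serre
prime ideals) of a `ℤ₊`-ring and `I` is a left Serre ideal with `Iⁿ ⊆ Q` for some
`n ≥ 1`, then `I ⊆ Q`. -/
theorem left_serreIdeal_le_of_pow_le_serreSemiprime
    [NonUnitalRing R] (b : Module.Basis Γ ℤ R) (hpos : PosBasis b)
    (Q : Set R) (hQ : ∃ S : Set (Set R), (∀ P ∈ S, IsSerrePrime b P) ∧ Q = ⋂₀ S)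
    (I : Set R) (hgraded : ∃ Γ' : Set Γ, I = ↑(Submodule.span ℤ (⇑b '' Γ')))
    (hleft : ∀ r ∈ I, ∀ s : R, s * r ∈ I)
    (n : ℕ) (hpow : ∀ f : Fin (n + 1) → R, (∀ i, f i ∈ I) → finProd f ∈ Q) :
    I ⊆ Q := by
  classical
  open SerreAux Submodule in
  obtain ⟨S, hS, rfl⟩ := hQ
  obtain ⟨Γ', hI⟩ := hgraded
  have hb : SerreAux.PosBasis' b := hpos
  have memI : ∀ x : R, x ∈ I ↔ ∀ γ, b.repr x γ ≠ 0 → γ ∈ Γ' := by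
    intro x; rw [hI, SetLike.mem_coe, SerreAux.mem_span_iff]
  have hbmemI : ∀ γ ∈ Γ', b γ ∈ I := by
    intro γ hγ; rw [hI]; exact Submodule.subset_span ⟨γ, hγ, rfl⟩
  suffices h : ∀ P ∈ S, I ⊆ P by
    intro x hx
    exact Set.mem_sInter.2 fun P hP => h P hP hx
  intro P hP
  obtain ⟨⟨⟨ΓP, hΓP⟩, hPl, hPr⟩, -, hPprime⟩ := hS P hP
  have memP : ∀ x : R, x ∈ P ↔ ∀ γ, b.repr x γ ≠ 0 → γ ∈ ΓP := by
    intro x; rw [hΓP, SetLike.mem_coe, SerreAux.mem_span_iff]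
  set IB : Set Γ := {γ | γ ∈ Γ' ∨ ∃ α ∈ Γ', ∃ β, b.repr (b α * b β) γ ≠ 0} with hIBdef
  set BB : ℕ → Set Γ := fun m =>
    {γ | ∃ g : Fin (m + 1) → Γ, (∀ i, g i ∈ IB) ∧ b.repr (finProd (⇑b ∘ g)) γ ≠ 0}
    with hBBdef
  have hgpos : ∀ (m : ℕ) (g : Fin (m + 1) → Γ), Pos b (finProd (⇑b ∘ g)) :=
    fun m g => finProd_pos b hb _ fun i => basis_pos b (g i)
  have hcons : ∀ (m : ℕ) (ε : Γ) (g : Fin (m + 1) → Γ),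
      finProd (⇑b ∘ Fin.cons ε g) = b ε * finProd (⇑b ∘ g) := by
    intro m ε g
    show (⇑b ∘ Fin.cons ε g) 0 * finProd (fun i => (⇑b ∘ Fin.cons ε g) i.succ) = _
    simp [Function.comp_def, Fin.cons_succ, Fin.cons_zero]
  have hIBl : ∀ δ γ, γ ∈ IB → ∀ γ₀, b.repr (b δ * b γ) γ₀ ≠ 0 → γ₀ ∈ IB := by
    rintro δ γ (hγ | ⟨α, hα, β, hc⟩) γ₀ h0
    · have : b δ * b γ ∈ I := hleft _ (hbmemI γ hγ) _
      exact Or.inl ((memI _).1 this γ₀ h0)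
    · have hd : Dom b (b δ * b γ) ((b δ * b α) * b β) := by
        rw [mul_assoc]
        exact mul_dom b hb (basis_pos b δ) (basis_pos b γ) (dom_refl b _)
          (basis_dom b (pos_mul b hb (basis_pos b α) (basis_pos b β)) hc)
      have h1 : b.repr ((b δ * b α) * b β) γ₀ ≠ 0 :=
        dom_ne b (pos_mul b hb (basis_pos b δ) (basis_pos b γ)) hd h0
      obtain ⟨ε, hε1, hε2⟩ := exists_left b h1
      have hεI : b δ * b α ∈ I := hleft _ (hbmemI α hα) _
      exact Or.inr ⟨ε, (memI _).1 hεI ε hε1, β, hε2⟩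
  have hIBr : ∀ γ, γ ∈ IB → ∀ δ γ₀, b.repr (b γ * b δ) γ₀ ≠ 0 → γ₀ ∈ IB := by
    rintro γ (hγ | ⟨α, hα, β, hc⟩) δ γ₀ h0
    · exact Or.inr ⟨γ, hγ, δ, h0⟩
    · have hd : Dom b (b γ * b δ) (b α * (b β * b δ)) := by
        rw [← mul_assoc]
        exact mul_dom b hb (basis_pos b γ) (basis_pos b δ)
          (basis_dom b (pos_mul b hb (basis_pos b α) (basis_pos b β)) hc) (dom_refl b _)
      have h1 := dom_ne b (pos_mul b hb (basis_pos b γ) (basis_pos b δ)) hd h0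
      obtain ⟨ζ, hζ1, hζ2⟩ := exists_right b h1
      exact Or.inr ⟨α, hα, ζ, hζ2⟩
  have hBB0 : BB 0 = IB := by
    ext γ
    constructor
    · rintro ⟨g, hg, h⟩
      have e : finProd (⇑b ∘ g) = b (g 0) := rfl
      rw [e, b.repr_self] at h
      have : γ = g 0 := by
        by_contra hne
        exact h (Finsupp.single_eq_of_ne fun hh => hne hh)
      rw [this]; exact hg 0
    · intro hγ
      refine ⟨fun _ => γ, fun _ => hγ, ?_⟩
      have e : finProd (⇑b ∘ fun _ : Fin 1 => γ) = b γ := rfl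
      rw [e, b.repr_self, Finsupp.single_eq_same]
      norm_num
  have hIBstep : ∀ m γ δ γ₀, γ ∈ IB → δ ∈ BB m →
      b.repr (b γ * b δ) γ₀ ≠ 0 → γ₀ ∈ BB (m + 1) := by
    rintro m γ δ γ₀ hγ ⟨g, hg, hδ⟩ h0
    have hd : Dom b (b γ * b δ) (b γ * finProd (⇑b ∘ g)) :=
      mul_dom b hb (basis_pos b γ) (basis_pos b δ) (dom_refl b _)
        (basis_dom b (hgpos m g) hδ)
    have h1 := dom_ne b (pos_mul b hb (basis_pos b γ) (basis_pos b δ)) hd h0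
    refine ⟨Fin.cons γ g, ?_, ?_⟩
    · intro i
      refine Fin.cases hγ (fun j => ?_) i
      rw [Fin.cons_succ]; exact hg j
    · rw [hcons m γ g]; exact h1
  have hBBl : ∀ m δ γ, γ ∈ BB m → ∀ γ₀, b.repr (b δ * b γ) γ₀ ≠ 0 → γ₀ ∈ BB m := by
    intro m δ γ hγ γ₀ h0
    cases m with
    | zero => rw [hBB0] at hγ ⊢; exact hIBl δ γ hγ γ₀ h0
    | succ m =>
      obtain ⟨g, hg, hrep⟩ := hγ
      have hd : Dom b (b δ * b γ) (b δ * finProd (⇑b ∘ g)) :=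
        mul_dom b hb (basis_pos b δ) (basis_pos b γ) (dom_refl b _)
          (basis_dom b (hgpos _ g) hrep)
      have h1 := dom_ne b (pos_mul b hb (basis_pos b δ) (basis_pos b γ)) hd h0
      have e : b δ * finProd (⇑b ∘ g) =
          (b δ * b (g 0)) * finProd (⇑b ∘ fun i => g i.succ) := by
        rw [show finProd (⇑b ∘ g) = b (g 0) * finProd (⇑b ∘ fun i => g i.succ) from rfl,
          ← mul_assoc]
      rw [e] at h1
      obtain ⟨ε, hε1, hε2⟩ := exists_left b h1
      have hεIB : ε ∈ IB := hIBl δ (g 0) (hg 0) ε hε1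
      refine ⟨Fin.cons ε fun i => g i.succ, ?_, ?_⟩
      · intro i
        refine Fin.cases hεIB (fun j => ?_) i
        rw [Fin.cons_succ]; exact hg j.succ
      · rw [hcons]; exact hε2
  have hBBr : ∀ m γ, γ ∈ BB m → ∀ δ γ₀, b.repr (b γ * b δ) γ₀ ≠ 0 → γ₀ ∈ BB m := by
    intro m
    induction m with
    | zero =>
      intro γ hγ δ γ₀ h0
      rw [hBB0] at hγ ⊢
      exact hIBr γ hγ δ γ₀ h0
    | succ m ih =>
      rintro γ ⟨g, hg, hrep⟩ δ γ₀ h0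
      have hd : Dom b (b γ * b δ) (finProd (⇑b ∘ g) * b δ) :=
        mul_dom b hb (basis_pos b γ) (basis_pos b δ)
          (basis_dom b (hgpos _ g) hrep) (dom_refl b _)
      have h1 := dom_ne b (pos_mul b hb (basis_pos b γ) (basis_pos b δ)) hd h0
      have e : finProd (⇑b ∘ g) * b δ =
          b (g 0) * (finProd (⇑b ∘ fun i => g i.succ) * b δ) := by
        rw [show finProd (⇑b ∘ g) = b (g 0) * finProd (⇑b ∘ fun i => g i.succ) from rfl,
          mul_assoc]
      rw [e] at h1
      obtain ⟨ζ, hζ1, hζ2⟩ := exists_right b h1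
      obtain ⟨ε, hε1, hε2⟩ := exists_left b hζ1
      have hεB : ε ∈ BB m := ⟨fun i => g i.succ, fun i => hg i.succ, hε1⟩
      have hζB : ζ ∈ BB m := ih ε hεB δ ζ hε2
      exact hIBstep m (g 0) ζ γ₀ (hg 0) hζB hζ2
  have hserre : ∀ A : Set Γ,
      (∀ δ γ, γ ∈ A → ∀ γ₀, b.repr (b δ * b γ) γ₀ ≠ 0 → γ₀ ∈ A) →
      (∀ γ, γ ∈ A → ∀ δ γ₀, b.repr (b γ * b δ) γ₀ ≠ 0 → γ₀ ∈ A) →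
      IsSerreIdeal b ↑(Submodule.span ℤ (⇑b '' A)) := by
    intro A hl hr
    refine ⟨⟨A, rfl⟩, ?_, ?_⟩
    · intro r hrm s
      exact mul_mem_span b
        (fun δ _ γ hγ => (mem_span_iff b).2 fun γ₀ h0 => hl δ γ hγ γ₀ h0)
        s (mem_top_span b s) r hrm
    · intro r hrm s
      exact mul_mem_span b
        (fun γ hγ δ _ => (mem_span_iff b).2 fun γ₀ h0 => hr γ hγ δ γ₀ h0)
        r hrm s (mem_top_span b s)
  have hJserre := hserre IB hIBl hIBr
  have hBserre : ∀ m, IsSerreIdeal b ↑(Submodule.span ℤ (⇑b '' BB m)) :=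
    fun m => hserre (BB m) (hBBl m) (hBBr m)
  have grp : ∀ m (f : Fin (m + 1) → R), (∀ i, ∃ x r, x ∈ I ∧ (f i = x ∨ f i = x * r)) →
      ∃ g : Fin (m + 1) → R, (∀ i, g i ∈ I) ∧
        (finProd f = finProd g ∨ ∃ r, finProd f = finProd g * r) := by
    intro m
    induction m with
    | zero =>
      intro f hf
      obtain ⟨x, r, hx, hfx⟩ := hf 0
      refine ⟨fun _ => x, fun _ => hx, ?_⟩
      cases hfx with
      | inl h => exact Or.inl h
      | inr h => exact Or.inr ⟨r, h⟩
    | succ m ih =>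
      intro f hf
      obtain ⟨g', hg', hG⟩ := ih (fun i => f i.succ) fun i => hf i.succ
      obtain ⟨x, r, hx, hfx⟩ := hf 0
      have hexp : finProd f = f 0 * finProd fun i => f i.succ := rfl
      cases hfx with
      | inl h0 =>
        refine ⟨Fin.cons x g', ?_, ?_⟩
        · intro i
          refine Fin.cases hx (fun j => ?_) i
          rw [Fin.cons_succ]; exact hg' j
        · rw [finProd_cons, hexp, h0]
          cases hG with
          | inl e => exact Or.inl (by rw [e])
          | inr e =>
            obtain ⟨r', e⟩ := e
            exact Or.inr ⟨r', by rw [e, mul_assoc]⟩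
      | inr h0 =>
        have habs : r * finProd g' =
            finProd (Fin.cons (r * g' 0) fun i => g' i.succ) := mul_finProd_head r g'
        have hgI : ∀ i, (Fin.cons (r * g' 0) fun i => g' i.succ : Fin (m+1) → R) i ∈ I := by
          intro i
          refine Fin.cases ?_ (fun j => ?_) i
          · rw [Fin.cons_zero]; exact hleft _ (hg' 0) r
          · rw [Fin.cons_succ]; exact hg' j.succ
        refine ⟨Fin.cons x (Fin.cons (r * g' 0) fun i => g' i.succ), ?_, ?_⟩
        · intro i
          refine Fin.cases hx (fun j => ?_) i
          rw [Fin.cons_succ]; exact hgI j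
        · rw [finProd_cons, hexp, h0]
          cases hG with
          | inl e =>
            refine Or.inl ?_
            rw [e, mul_assoc, habs]
          | inr e =>
            obtain ⟨r', e⟩ := e
            refine Or.inr ⟨r', ?_⟩
            rw [e, ← habs]
            simp only [mul_assoc]
  have hbase : BB n ⊆ ΓP := by
    rintro γ₀ ⟨g, hg, hrep⟩
    have hch : ∀ i : Fin (n + 1), ∃ v : R,
        (∃ x r, x ∈ I ∧ (v = x ∨ v = x * r)) ∧ Dom b (b (g i)) v := by
      intro i
      rcases hg i with h | ⟨α, hα, β, hc⟩
      · exact ⟨b (g i), ⟨b (g i), 0, hbmemI _ h, Or.inl rfl⟩, dom_refl b _⟩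
      · exact ⟨b α * b β, ⟨b α, b β, hbmemI _ hα, Or.inr rfl⟩,
          basis_dom b (pos_mul b hb (basis_pos b α) (basis_pos b β)) hc⟩
    choose v hvI hvd using hch
    have hdom : Dom b (finProd (⇑b ∘ g)) (finProd v) :=
      finProd_dom b hb _ _ (fun i => basis_pos b (g i)) hvd
    have h1 : b.repr (finProd v) γ₀ ≠ 0 := dom_ne b (hgpos n g) hdom hrep
    obtain ⟨gg, hggI, hG⟩ := grp n v hvI
    have hfg : finProd gg ∈ P := Set.mem_sInter.1 (hpow gg hggI) P hP
    have hfv : finProd v ∈ P := by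
      cases hG with
      | inl e => rw [e]; exact hfg
      | inr e => obtain ⟨r, e⟩ := e; rw [e]; exact hPr _ hfg r
    exact (memP _).1 hfv γ₀ h1
  have hprod : ∀ m, ∀ x ∈ Submodule.span ℤ (⇑b '' IB),
      ∀ y ∈ Submodule.span ℤ (⇑b '' BB m), x * y ∈ Submodule.span ℤ (⇑b '' BB (m + 1)) :=
    fun m => mul_mem_span b
      (fun γ hγ δ hδ => (mem_span_iff b).2 fun γ₀ h0 => hIBstep m γ δ γ₀ hγ hδ h0)
  have down : ∀ m, (↑(Submodule.span ℤ (⇑b '' BB m)) : Set R) ⊆ P →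
      (↑(Submodule.span ℤ (⇑b '' IB)) : Set R) ⊆ P := by
    intro m
    induction m with
    | zero => intro h; rwa [hBB0] at h
    | succ m ih =>
      intro h
      rcases hPprime _ _ hJserre (hBserre m)
          (fun x hx y hy => h (hprod m x hx y hy)) with h' | h'
      · exact h'
      · exact ih h'
  have hbase' : (↑(Submodule.span ℤ (⇑b '' BB n)) : Set R) ⊆ P := by
    rw [hΓP]
    exact fun x hx => Submodule.span_mono (Set.image_mono (f := ⇑b) hbase) hx
  have hfinal := down n hbase'
  intro x hx
  apply hfinal
  rw [hI] at hx
  exact Submodule.span_mono (Set.image_mono (f := ⇑b) fun γ hγ => Or.inl hγ) hx
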